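/- Fix a discretization as in the context and let g(φ,s) = s for (φ,s) ∈ S. The exact backprojection satisfies (R* g)(x) = 2𝐲 for every x = (𝐱,𝐲) ∈ Ω, and for every i,j ∈ {0,…,N_x−1} with ‖x_ij‖ ≤ 1 − δ_s/2, writing x_ij = (𝐱_i, 𝐲_j), the pixel-driven backprojection error satisfies (R* g)(x_ij) − (R^pd* g)(x_ij) = −𝐱_i · Σ_{q=0}^{N_φ−1} |Φ_q| cos φ_q + 𝐲_j · (2 − Σ_{q=0}^{N_φ−1} |Φ_q| sin φ_q); that is, the error of the pixel-driven backprojection equals the error of the Riemann sums approximating the integrals ∫₀^π cos φ dφ = 0 and ∫₀^π sin φ dφ = 2. -/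

import Mathlib

open MeasureTheory Real Set Filter

/-- The ray-driven weight function `w^rd(φ, t)` (for spatial resolution `δx`).
Here `κ(φ) = min{1/|cos φ|, 1/|sin φ|}` (with `1/0 = ∞`) is expressed as
`1 / max |cos φ| |sin φ|`, which is the same real number. -/
noncomputable def rayWeight (δx φ t : ℝ) : ℝ :=
  (1 / δx) *
    (if δx / 2 * |(|Real.cos φ| - |Real.sin φ|)| ≤ |t| ∧
        |t| < δx / 2 * (|Real.cos φ| + |Real.sin φ|) then
      (δx / 2 * (|Real.cos φ| + |Real.sin φ|) - |t|) / (δx * |Real.cos φ * Real.sin φ|)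
    else if |t| < δx / 2 * |(|Real.cos φ| - |Real.sin φ|)| then
      1 / max |Real.cos φ| |Real.sin φ|
    else if (φ = 0 ∨ φ = Real.pi / 2) ∧ |t| = δx / 2 * (|Real.cos φ| + |Real.sin φ|) then
      1 / 2
    else 0)

/-- The pixel-driven weight function `w^pd(t)` (for detector resolution `δs`). -/
noncomputable def pixelWeight (δs t : ℝ) : ℝ := (1 / δs ^ 2) * max (δs - |t|) 0

/-- Spatial pixel center `x_ij` for an `Nx × Nx` grid on `[-1,1]²` (so `δ_x = 2/Nx`). -/
noncomputable def xc (Nx : ℕ) (i j : Fin Nx) : ℝ × ℝ :=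
  (((i : ℝ) + 1 / 2) * (2 / (Nx : ℝ)) - 1, ((j : ℝ) + 1 / 2) * (2 / (Nx : ℝ)) - 1)

/-- Spatial pixel `X_ij = x_ij + [-δ_x/2, δ_x/2]²`. -/
noncomputable def Xpix (Nx : ℕ) (i j : Fin Nx) : Set (ℝ × ℝ) :=
  {y | |y.1 - (xc Nx i j).1| ≤ (2 / (Nx : ℝ)) / 2 ∧ |y.2 - (xc Nx i j).2| ≤ (2 / (Nx : ℝ)) / 2}

/-- Detector pixel center `s_p = (p + 1/2) δ_s - 1` with `δ_s = 2/Ns`. -/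
noncomputable def sc (Ns p : ℕ) : ℝ := ((p : ℝ) + 1 / 2) * (2 / (Ns : ℝ)) - 1

/-- Detector pixel `S_p = [s_p - δ_s/2, s_p + δ_s/2)`. -/
noncomputable def Spix (Ns : ℕ) (p : Fin Ns) : Set ℝ :=
  Set.Ico (sc Ns p - (2 / (Ns : ℝ)) / 2) (sc Ns p + (2 / (Ns : ℝ)) / 2)

/-- The successor angle `φ_{q+1}`, with the convention `φ_{N_φ} = φ_0 + π`. -/
noncomputable def angNext {Nφ : ℕ} (ang : Fin Nφ → ℝ) (q : Fin Nφ) : ℝ :=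
  if h : (q : ℕ) + 1 < Nφ then ang ⟨(q : ℕ) + 1, h⟩ else ang ⟨0, q.pos⟩ + Real.pi

/-- The predecessor angle `φ_{q-1}`, with the convention `φ_{-1} = φ_{N_φ-1} - π`. -/
noncomputable def angPrev {Nφ : ℕ} (ang : Fin Nφ → ℝ) (q : Fin Nφ) : ℝ :=
  if (q : ℕ) = 0 then ang ⟨Nφ - 1, Nat.sub_lt q.pos Nat.one_pos⟩ - Real.pi
  else ang ⟨(q : ℕ) - 1, lt_of_le_of_lt (Nat.sub_le _ _) q.isLt⟩

/-- Left endpoint `(φ_{q-1} + φ_q)/2` of the angular pixel `Φ_q`. -/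
noncomputable def phiLo {Nφ : ℕ} (ang : Fin Nφ → ℝ) (q : Fin Nφ) : ℝ :=
  (angPrev ang q + ang q) / 2

/-- Right endpoint `(φ_q + φ_{q+1})/2` of the angular pixel `Φ_q`. -/
noncomputable def phiHi {Nφ : ℕ} (ang : Fin Nφ → ℝ) (q : Fin Nφ) : ℝ :=
  (ang q + angNext ang q) / 2

/-- The length `|Φ_q|` of the angular pixel `Φ_q`. -/
noncomputable def phiLen {Nφ : ℕ} (ang : Fin Nφ → ℝ) (q : Fin Nφ) : ℝ :=
  phiHi ang q - phiLo ang q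

/-- The angular pixel `Φ_q = [(φ_{q-1}+φ_q)/2, (φ_q+φ_{q+1})/2)`, π-periodically
projected into `[0, π)`. -/
noncomputable def PhiSet {Nφ : ℕ} (ang : Fin Nφ → ℝ) (q : Fin Nφ) : Set ℝ :=
  {φ | φ ∈ Set.Ico 0 Real.pi ∧
    ∃ k : ℤ, φ + (k : ℝ) * Real.pi ∈ Set.Ico (phiLo ang q) (phiHi ang q)}

/-- `x · θ_φ`, the projection of the point `x` onto the detector direction `θ_φ`. -/
noncomputable def proj (x : ℝ × ℝ) (φ : ℝ) : ℝ := x.1 * Real.cos φ + x.2 * Real.sin φ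

/-- The spatial domain `Ω = B(0,1) ⊂ ℝ²`. -/
noncomputable def Omg : Set (ℝ × ℝ) := {x | x.1 ^ 2 + x.2 ^ 2 < 1}

/-- The sinogram domain `S = [0, π) × (-1, 1)`, with coordinates `(φ, s)`. -/
noncomputable def Sdom : Set (ℝ × ℝ) := Set.Ico 0 Real.pi ×ˢ Set.Ioo (-1 : ℝ) 1

/-- The convolutional Radon transform `R_ω` with weight function `ω`. -/
noncomputable def convRadon (Nx Ns : ℕ) {Nφ : ℕ} (ang : Fin Nφ → ℝ)
    (ω : ℝ → ℝ → ℝ) (f : ℝ × ℝ → ℝ) (y : ℝ × ℝ) : ℝ :=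
  ∑ q : Fin Nφ, ∑ p : Fin Ns,
    Set.indicator (PhiSet ang q ×ˢ Spix Ns p) (fun _ => (1 : ℝ)) y *
      ∑ i : Fin Nx, ∑ j : Fin Nx,
        ω (ang q) (proj (xc Nx i j) (ang q) - sc Ns (p : ℕ)) * ∫ x in Xpix Nx i j, f x

/-- The convolutional backprojection `R_ω^*` with weight function `ω`. -/
noncomputable def convBack (Nx Ns : ℕ) {Nφ : ℕ} (ang : Fin Nφ → ℝ)
    (ω : ℝ → ℝ → ℝ) (g : ℝ × ℝ → ℝ) (x : ℝ × ℝ) : ℝ :=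
  ∑ i : Fin Nx, ∑ j : Fin Nx,
    Set.indicator (Xpix Nx i j) (fun _ => (1 : ℝ)) x *
      ∑ q : Fin Nφ, ∑ p : Fin Ns,
        ω (ang q) (proj (xc Nx i j) (ang q) - sc Ns (p : ℕ)) *
          ∫ z in PhiSet ang q ×ˢ Spix Ns p, g z

/-- The Radon transform `(Rf)(φ,s) = ∫ f(s θ_φ + t θ_φ^⊥) dt`, as a function of
`y = (φ, s)`. -/
noncomputable def radonT (f : ℝ × ℝ → ℝ) (y : ℝ × ℝ) : ℝ :=
  ∫ t : ℝ, f (y.2 * Real.cos y.1 - t * Real.sin y.1, y.2 * Real.sin y.1 + t * Real.cos y.1)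

/-- The backprojection `(R^* g)(x) = ∫₀^π g(φ, x · θ_φ) dφ`. -/
noncomputable def radonAdj (g : ℝ × ℝ → ℝ) (x : ℝ × ℝ) : ℝ :=
  ∫ φ in (0 : ℝ)..Real.pi, g (φ, proj x φ)

variable {Nφ : ℕ}

lemma prev_lt (ang : Fin Nφ → ℝ) (hmono : StrictMono ang) (hang : ∀ q, ang q ∈ Set.Ico 0 Real.pi) (q : Fin Nφ) : angPrev ang q < ang q := by
  unfold angPrev; split_ifs with h
  · have h1 := (hang ⟨Nφ - 1, Nat.sub_lt q.pos Nat.one_pos⟩).2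
    have h2 := (hang q).1
    linarith
  · exact hmono (by simp [Fin.lt_def]; omega)

lemma lt_next (ang : Fin Nφ → ℝ) (hmono : StrictMono ang) (hang : ∀ q, ang q ∈ Set.Ico 0 Real.pi) (q : Fin Nφ) : ang q < angNext ang q := by
  unfold angNext; split_ifs with h
  · exact hmono (by simp [Fin.lt_def])
  · have h1 := (hang q).2
    have h2 := (hang ⟨0, q.pos⟩).1
    linarith

lemma prev_ge (ang : Fin Nφ → ℝ) (hang : ∀ q, ang q ∈ Set.Ico 0 Real.pi) (q : Fin Nφ) : -Real.pi ≤ angPrev ang q := by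
  unfold angPrev; split_ifs with h
  · have := (hang ⟨Nφ - 1, Nat.sub_lt q.pos Nat.one_pos⟩).1; linarith
  · have := (hang ⟨(q:ℕ) - 1, lt_of_le_of_lt (Nat.sub_le _ _) q.isLt⟩).1
    linarith [Real.pi_pos]

lemma next_lt (ang : Fin Nφ → ℝ) (hang : ∀ q, ang q ∈ Set.Ico 0 Real.pi) (q : Fin Nφ) : angNext ang q < 2 * Real.pi := by
  unfold angNext; split_ifs with h
  · have := (hang ⟨(q:ℕ)+1, h⟩).2; linarith [Real.pi_pos]
  · have := (hang ⟨0, q.pos⟩).2; linarith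

lemma spread (ang : Fin Nφ → ℝ) (hmono : StrictMono ang) (hang : ∀ q, ang q ∈ Set.Ico 0 Real.pi) (q : Fin Nφ) : angNext ang q ≤ angPrev ang q + 2 * Real.pi := by
  have hpg := prev_ge ang hang q
  unfold angNext angPrev; split_ifs with h1 h2
  · have := (hang ⟨(q:ℕ)+1, h1⟩).2
    have hp := (hang ⟨Nφ - 1, Nat.sub_lt q.pos Nat.one_pos⟩).1
    linarith [Real.pi_pos]
  · have := (hang ⟨(q:ℕ)+1, h1⟩).2
    have hp := (hang ⟨(q:ℕ) - 1, lt_of_le_of_lt (Nat.sub_le _ _) q.isLt⟩).1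
    linarith [Real.pi_pos]
  · have : ang ⟨0, q.pos⟩ ≤ ang ⟨Nφ - 1, Nat.sub_lt q.pos Nat.one_pos⟩ :=
      hmono.monotone (by simp [Fin.le_def])
    linarith
  · have : ang ⟨0, q.pos⟩ ≤ ang ⟨(q:ℕ) - 1, lt_of_le_of_lt (Nat.sub_le _ _) q.isLt⟩ :=
      hmono.monotone (by simp [Fin.le_def])
    linarith [Real.pi_pos]

lemma phiSet_vol (ang : Fin Nφ → ℝ) (hmono : StrictMono ang)
    (hang : ∀ q, ang q ∈ Set.Ico 0 Real.pi) (q : Fin Nφ) :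
    (volume (PhiSet ang q)).toReal = phiLen ang q := by
  have pi_pos := Real.pi_pos
  have hpl := prev_lt ang hmono hang q
  have hln := lt_next ang hmono hang q
  have hpg := prev_ge ang hang q
  have hnl := next_lt ang hang q
  have hsp := spread ang hmono hang q
  have ha0 := (hang q).1
  have ha1 := (hang q).2
  set lo := phiLo ang q with hlo
  set hi := phiHi ang q with hhi
  have hlo' : lo = (angPrev ang q + ang q) / 2 := rfl
  have hhi' : hi = (ang q + angNext ang q) / 2 := rfl
  have hlh : lo < hi := by rw [hlo', hhi']; linarith
  have h1 : hi ≤ lo + Real.pi := by rw [hlo', hhi']; linarith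
  have h2 : -(Real.pi/2) ≤ lo := by rw [hlo']; linarith
  have h3 : hi < 3 * Real.pi / 2 := by rw [hhi']; linarith
  have h4 : lo < Real.pi := by rw [hlo']; linarith
  have h5 : 0 < hi := by rw [hhi']; linarith
  have hlen : phiLen ang q = hi - lo := rfl
  have key : ∀ φ : ℝ, φ ∈ PhiSet ang q ↔ (φ ∈ Set.Ico 0 Real.pi ∧
      (φ ∈ Set.Ico lo hi ∨ φ + Real.pi ∈ Set.Ico lo hi ∨ φ - Real.pi ∈ Set.Ico lo hi)) := by
    intro φ
    constructor
    · rintro ⟨hφ, k, hk⟩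
      refine ⟨hφ, ?_⟩
      obtain ⟨hφ0, hφ1⟩ := hφ
      obtain ⟨hk1, hk2⟩ := hk
      have hkb1 : (k:ℝ) * Real.pi < 3 * Real.pi / 2 := by linarith
      have hkb2 : -(3 * Real.pi / 2) < (k:ℝ) * Real.pi := by linarith
      have hk1' : (k:ℝ) < 2 := by nlinarith
      have hk2' : -2 < (k:ℝ) := by nlinarith
      have hk1'' : k < 2 := by exact_mod_cast hk1'
      have hk2'' : -2 < k := by exact_mod_cast hk2'
      interval_cases k
      · right; right
        push_cast at hk1 hk2
        constructor <;> linarith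
      · left
        push_cast at hk1 hk2
        constructor <;> linarith
      · right; left
        push_cast at hk1 hk2
        constructor <;> linarith
    · rintro ⟨hφ, h | h | h⟩
      · exact ⟨hφ, 0, by push_cast; simpa using h⟩
      · exact ⟨hφ, 1, by push_cast; simpa using h⟩
      · exact ⟨hφ, -1, by push_cast; simpa [sub_eq_add_neg] using h⟩
  rcases lt_or_ge lo 0 with hneg | hpos
  · have hs : PhiSet ang q = Set.Ico 0 hi ∪ Set.Ico (lo + Real.pi) Real.pi := by
      ext φ
      rw [key]
      simp only [Set.mem_Ico, Set.mem_union]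
      constructor
      · rintro ⟨⟨g0, g1⟩, ⟨a1, a2⟩ | ⟨a1, a2⟩ | ⟨a1, a2⟩⟩
        · exact Or.inl ⟨g0, a2⟩
        · exact absurd (lt_of_lt_of_le a2 (by linarith)) (by linarith)
        · exact Or.inr ⟨by linarith, g1⟩
      · rintro (⟨a1, a2⟩ | ⟨a1, a2⟩)
        · exact ⟨⟨a1, by linarith⟩, Or.inl ⟨by linarith, a2⟩⟩
        · exact ⟨⟨by linarith, a2⟩, Or.inr (Or.inr ⟨by linarith, by linarith⟩)⟩
    rw [hs, measure_union (by
        apply Set.disjoint_left.mpr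
        rintro φ ⟨b1, b2⟩ ⟨c1, c2⟩
        linarith) measurableSet_Ico]
    rw [Real.volume_Ico, Real.volume_Ico, hlen]
    rw [← ENNReal.ofReal_add (by linarith) (by linarith), ENNReal.toReal_ofReal (by linarith)]
    ring
  · rcases le_or_gt hi Real.pi with hle | hgt
    · have hs : PhiSet ang q = Set.Ico lo hi := by
        ext φ
        rw [key]
        simp only [Set.mem_Ico]
        constructor
        · rintro ⟨⟨g0, g1⟩, ⟨a1, a2⟩ | ⟨a1, a2⟩ | ⟨a1, a2⟩⟩
          · exact ⟨a1, a2⟩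
          · exact absurd (lt_of_lt_of_le a2 hle) (by linarith)
          · exact absurd (le_trans hpos a1) (by linarith)
        · rintro ⟨a1, a2⟩
          exact ⟨⟨le_trans hpos a1, by linarith⟩, Or.inl ⟨a1, a2⟩⟩
      rw [hs, Real.volume_Ico, hlen, ENNReal.toReal_ofReal (by linarith)]
    · have hs : PhiSet ang q = Set.Ico 0 (hi - Real.pi) ∪ Set.Ico lo Real.pi := by
        ext φ
        rw [key]
        simp only [Set.mem_Ico, Set.mem_union]
        constructor
        · rintro ⟨⟨g0, g1⟩, ⟨a1, a2⟩ | ⟨a1, a2⟩ | ⟨a1, a2⟩⟩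
          · exact Or.inr ⟨a1, g1⟩
          · exact Or.inl ⟨g0, by linarith⟩
          · exact absurd (le_trans hpos a1) (by linarith)
        · rintro (⟨a1, a2⟩ | ⟨a1, a2⟩)
          · exact ⟨⟨a1, by linarith⟩, Or.inr (Or.inl ⟨by linarith, by linarith⟩)⟩
          · exact ⟨⟨le_trans hpos a1, a2⟩, Or.inl ⟨a1, by linarith⟩⟩
      rw [hs, measure_union (by
          apply Set.disjoint_left.mpr
          rintro φ ⟨b1, b2⟩ ⟨c1, c2⟩
          linarith) measurableSet_Ico]
      rw [Real.volume_Ico, Real.volume_Ico, hlen]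
      rw [← ENNReal.ofReal_add (by linarith) (by linarith), ENNReal.toReal_ofReal (by linarith)]
      ring

lemma relu_hat (d u : ℝ) (hd : 0 ≤ d) : max (d - |u|) 0 = max (u + d) 0 - 2 * max u 0 + max (u - d) 0 := by
  rcases abs_cases u with ⟨h1, h2⟩ | ⟨h1, h2⟩ <;>
    simp only [max_def] <;> split_ifs <;> linarith

lemma hatSum (N : ℕ) (hN : 0 < N) (t : ℝ) (ht : |t| ≤ 1 - 1 / (N:ℝ)) :
    ∑ p : Fin N, pixelWeight (2 / (N:ℝ)) (t - sc N (p:ℕ)) * ((2 / (N:ℝ)) * sc N (p:ℕ)) = t := by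
  have hNr : (1:ℝ) ≤ (N:ℝ) := by exact_mod_cast hN
  have hN0 : (N:ℝ) ≠ 0 := by positivity
  have h1N : (0:ℝ) < 1 / (N:ℝ) := by positivity
  set δ : ℝ := 2 / (N:ℝ) with hδdef
  have hδpos : (0:ℝ) < δ := by positivity
  obtain ⟨habs1, habs2⟩ := abs_le.mp ht
  set a : ℕ → ℝ := fun k => max (t - (((k:ℝ) - 1 + 1/2) * δ - 1)) 0 with ha
  set H : ℕ → ℝ := fun k => (((k:ℝ) + 1/2) * δ - 1) * (a (k+1) - a k) - δ * a (k+1) with hH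
  have step : ∀ k : ℕ, pixelWeight δ (t - sc N k) * (δ * sc N k) = (1/δ) * (H (k+1) - H k) := by
    intro k
    set u := t - sc N k with hu
    have e0 : a k = max (u + δ) 0 := by
      simp only [ha]; congr 1; rw [hu, sc, hδdef]; push_cast; ring
    have e1 : a (k+1) = max u 0 := by
      simp only [ha]; congr 1; rw [hu, sc, hδdef]; push_cast; ring
    have e2 : a (k+1+1) = max (u - δ) 0 := by
      simp only [ha]; congr 1; rw [hu, sc, hδdef]; push_cast; ring
    have e3 : ((((k:ℕ)+1 : ℕ):ℝ) + 1/2) * δ - 1 = sc N k + δ := by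
      rw [sc, hδdef]; push_cast; ring
    have e4 : ((k:ℝ) + 1/2) * δ - 1 = sc N k := by rw [sc, hδdef]
    rw [pixelWeight, relu_hat δ u hδpos.le]
    simp only [hH]
    rw [e2, e1, e0, e3, e4]
    field_simp
    ring
  rw [Fin.sum_univ_eq_sum_range (fun k => pixelWeight δ (t - sc N k) * (δ * sc N k)) N]
  rw [Finset.sum_congr rfl (fun k _ => step k), ← Finset.mul_sum, Finset.sum_range_sub H N]
  have hA0 : a 0 = t + 1/(N:ℝ) + 1 := by
    simp only [ha]
    have : (((0:ℕ):ℝ) - 1 + 1/2) * δ - 1 = -(1/(N:ℝ)) - 1 := by rw [hδdef]; push_cast; ring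
    rw [this, max_eq_left (by linarith)]
    ring
  have hA1 : a 1 = t - 1/(N:ℝ) + 1 := by
    simp only [ha]
    have : (((1:ℕ):ℝ) - 1 + 1/2) * δ - 1 = 1/(N:ℝ) - 1 := by rw [hδdef]; push_cast; ring
    rw [this, max_eq_left (by linarith)]
    ring
  have hAN : a N = 0 := by
    simp only [ha]
    have : (((N:ℕ):ℝ) - 1 + 1/2) * δ - 1 = 1 - 1/(N:ℝ) := by rw [hδdef]; field_simp; ring
    rw [this, max_eq_right (by linarith)]
  have hAN1 : a (N+1) = 0 := by
    simp only [ha]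
    have : (((N+1:ℕ):ℝ) - 1 + 1/2) * δ - 1 = 1 + 1/(N:ℝ) := by rw [hδdef]; field_simp; push_cast; ring
    rw [this, max_eq_right (by linarith)]
  have hHN : H N = 0 := by simp only [hH]; rw [hAN, hAN1]; ring
  have hH0 : H 0 = -(δ * t) := by
    simp only [hH]
    rw [show (0:ℕ)+1 = 1 from rfl, hA1, hA0]
    have : (((0:ℕ):ℝ) + 1/2) * δ - 1 = 1/(N:ℝ) - 1 := by rw [hδdef]; push_cast; ring
    rw [this, hδdef]
    field_simp
    ring
  rw [hHN, hH0]
  field_simp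
  ring

lemma part1' (x : ℝ × ℝ) : radonAdj (fun y => y.2) x = 2 * x.2 := by
  unfold radonAdj proj
  simp only []
  rw [intervalIntegral.integral_add (f := fun φ => x.1 * Real.cos φ) (g := fun φ => x.2 * Real.sin φ) ((continuous_const.mul Real.continuous_cos).intervalIntegrable _ _)
    ((continuous_const.mul Real.continuous_sin).intervalIntegrable _ _),
    intervalIntegral.integral_const_mul, intervalIntegral.integral_const_mul,
    integral_cos, integral_sin]
  simp
  ring

lemma prodInt (A : Set ℝ) (B : Set ℝ) :
    ∫ y in A ×ˢ B, (y : ℝ × ℝ).2 = (volume A).toReal * ∫ s in B, s := by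
  rw [Measure.volume_eq_prod, ← Measure.prod_restrict]
  have h := MeasureTheory.integral_prod_mul (μ := volume.restrict A) (ν := volume.restrict B)
    (f := fun _ => (1:ℝ)) (g := fun s => s)
  rw [← measureReal_def]
  simpa using h

lemma spixInt (Ns : ℕ) (hNs : 0 < Ns) (p : Fin Ns) :
    ∫ s in Spix Ns p, s = (2 / (Ns:ℝ)) * sc Ns (p:ℕ) := by
  have hδ : (0:ℝ) < 2 / (Ns:ℝ) := by positivity
  rw [Spix, MeasureTheory.integral_Ico_eq_integral_Ioo, ← MeasureTheory.integral_Ioc_eq_integral_Ioo,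
    ← intervalIntegral.integral_of_le (by linarith), integral_id]
  ring

lemma proj_bound (x : ℝ × ℝ) (φ : ℝ) : |proj x φ| ≤ Real.sqrt (x.1^2 + x.2^2) := by
  rw [proj, ← Real.sqrt_sq_eq_abs]
  apply Real.sqrt_le_sqrt
  nlinarith [Real.sin_sq_add_cos_sq φ, sq_nonneg (x.1 * Real.sin φ - x.2 * Real.cos φ)]

lemma coord_iff (Nx : ℕ) (hNx : 0 < Nx) (m n : Fin Nx) :
    |(((m:ℝ) + 1/2) * (2/(Nx:ℝ)) - 1) - (((n:ℝ) + 1/2) * (2/(Nx:ℝ)) - 1)| ≤ (2/(Nx:ℝ))/2 ↔ m = n := by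
  have hδ : (0:ℝ) < 2 / (Nx:ℝ) := by positivity
  constructor
  · intro h
    by_contra hne
    have hint : ((m:ℕ):ℤ) - ((n:ℕ):ℤ) ≠ 0 := by
      intro e
      exact hne (Fin.ext (by omega))
    have h1 : (1:ℝ) ≤ |(m:ℝ) - (n:ℝ)| := by
      have := Int.one_le_abs hint
      exact_mod_cast this
    have he : (((m:ℝ) + 1/2) * (2/(Nx:ℝ)) - 1) - (((n:ℝ) + 1/2) * (2/(Nx:ℝ)) - 1)
        = ((m:ℝ) - (n:ℝ)) * (2/(Nx:ℝ)) := by ring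
    rw [he, abs_mul, abs_of_pos hδ] at h
    nlinarith
  · rintro rfl
    simp [hδ.le]
    positivity

lemma mem_Xpix_iff (Nx : ℕ) (hNx : 0 < Nx) (i j i' j' : Fin Nx) :
    xc Nx i j ∈ Xpix Nx i' j' ↔ i' = i ∧ j' = j := by
  rw [Xpix, Set.mem_setOf_eq, xc, xc]
  simp only []
  rw [coord_iff Nx hNx i i', coord_iff Nx hNx j j']
  constructor
  · rintro ⟨h1, h2⟩; exact ⟨h1.symm, h2.symm⟩
  · rintro ⟨h1, h2⟩; exact ⟨h1.symm, h2.symm⟩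

/-- For a fixed discretization and the sinogram `g(φ,s) = s`: the exact
backprojection satisfies `(R^* g)(x) = 2𝐲` for every `x = (𝐱,𝐲) ∈ Ω`, and for every
`i, j` with `‖x_ij‖ ≤ 1 - δ_s/2`, writing `x_ij = (𝐱_i, 𝐲_j)`, the pixel-driven
backprojection error satisfies `(R^* g)(x_ij) - (R^pd* g)(x_ij)
= -𝐱_i · Σ_q |Φ_q| cos φ_q + 𝐲_j · (2 - Σ_q |Φ_q| sin φ_q)`. -/
theorem stmt14 (Nx Nφ Ns : ℕ) (hNx : 0 < Nx) (hNφ : 0 < Nφ) (hNs : 0 < Ns)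
    (ang : Fin Nφ → ℝ) (hmono : StrictMono ang) (hang : ∀ q, ang q ∈ Set.Ico 0 Real.pi) :
    (∀ x ∈ Omg, radonAdj (fun y => y.2) x = 2 * x.2)
    ∧ (∀ i j : Fin Nx,
        Real.sqrt ((xc Nx i j).1 ^ 2 + (xc Nx i j).2 ^ 2) ≤ 1 - (2 / (Ns : ℝ)) / 2 →
        radonAdj (fun y => y.2) (xc Nx i j) -
            convBack Nx Ns ang (fun _ t => pixelWeight (2 / (Ns : ℝ)) t)
              (fun y => y.2) (xc Nx i j)
          = -(xc Nx i j).1 * (∑ q : Fin Nφ, phiLen ang q * Real.cos (ang q)) +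
            (xc Nx i j).2 * (2 - ∑ q : Fin Nφ, phiLen ang q * Real.sin (ang q))) := by
  constructor
  · intro x _
    exact part1' x
  · intro i j hij
    set x := xc Nx i j with hx
    have hcb : convBack Nx Ns ang (fun _ t => pixelWeight (2/(Ns:ℝ)) t) (fun y => y.2) x
        = ∑ q : Fin Nφ, ∑ p : Fin Ns,
            pixelWeight (2/(Ns:ℝ)) (proj x (ang q) - sc Ns (p:ℕ)) *
              ∫ z in PhiSet ang q ×ˢ Spix Ns p, (fun y : ℝ × ℝ => y.2) z := by
      rw [convBack]
      rw [Finset.sum_eq_single i]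
      · rw [Finset.sum_eq_single j]
        · rw [Set.indicator_of_mem ((mem_Xpix_iff Nx hNx i j i j).mpr ⟨rfl, rfl⟩), one_mul]
        · intro b _ hb
          rw [Set.indicator_of_notMem
            (fun hmem => hb ((mem_Xpix_iff Nx hNx i j i b).mp hmem).2), zero_mul]
        · intro h; exact absurd (Finset.mem_univ j) h
      · intro b _ hb
        apply Finset.sum_eq_zero
        intro j' _
        rw [Set.indicator_of_notMem
          (fun hmem => hb ((mem_Xpix_iff Nx hNx i j b j').mp hmem).1), zero_mul]
      · intro h; exact absurd (Finset.mem_univ i) h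
    have hint : ∀ (q : Fin Nφ) (p : Fin Ns),
        (∫ z in PhiSet ang q ×ˢ Spix Ns p, (fun y : ℝ × ℝ => y.2) z)
          = phiLen ang q * ((2/(Ns:ℝ)) * sc Ns (p:ℕ)) := by
      intro q p
      rw [show (∫ z in PhiSet ang q ×ˢ Spix Ns p, (fun y : ℝ × ℝ => y.2) z)
          = ∫ z in PhiSet ang q ×ˢ Spix Ns p, (z : ℝ × ℝ).2 from rfl]
      rw [prodInt, phiSet_vol ang hmono hang q, spixInt Ns hNs p]
    have hbnd : ∀ q : Fin Nφ, |proj x (ang q)| ≤ 1 - 1/(Ns:ℝ) := by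
      intro q
      have h1 := proj_bound x (ang q)
      have h2 : (2/(Ns:ℝ))/2 = 1/(Ns:ℝ) := by ring
      rw [h2] at hij
      exact le_trans h1 hij
    have hq : ∀ q : Fin Nφ,
        (∑ p : Fin Ns, pixelWeight (2/(Ns:ℝ)) (proj x (ang q) - sc Ns (p:ℕ)) *
          (phiLen ang q * ((2/(Ns:ℝ)) * sc Ns (p:ℕ))))
        = phiLen ang q * proj x (ang q) := by
      intro q
      have : (∑ p : Fin Ns, pixelWeight (2/(Ns:ℝ)) (proj x (ang q) - sc Ns (p:ℕ)) *
          (phiLen ang q * ((2/(Ns:ℝ)) * sc Ns (p:ℕ))))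
          = phiLen ang q * ∑ p : Fin Ns, pixelWeight (2/(Ns:ℝ)) (proj x (ang q) - sc Ns (p:ℕ)) *
            ((2/(Ns:ℝ)) * sc Ns (p:ℕ)) := by
        rw [Finset.mul_sum]
        exact Finset.sum_congr rfl (fun p _ => by ring)
      rw [this, hatSum Ns hNs _ (hbnd q)]
    have hcb2 : convBack Nx Ns ang (fun _ t => pixelWeight (2/(Ns:ℝ)) t) (fun y => y.2) x
        = ∑ q : Fin Nφ, phiLen ang q * proj x (ang q) := by
      rw [hcb]
      refine Finset.sum_congr rfl (fun q _ => ?_)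
      rw [Finset.sum_congr rfl (fun p _ => by rw [hint q p]), hq q]
    have hexp : (∑ q : Fin Nφ, phiLen ang q * proj x (ang q))
        = x.1 * (∑ q : Fin Nφ, phiLen ang q * Real.cos (ang q)) +
          x.2 * (∑ q : Fin Nφ, phiLen ang q * Real.sin (ang q)) := by
      rw [Finset.mul_sum, Finset.mul_sum, ← Finset.sum_add_distrib]
      refine Finset.sum_congr rfl (fun q _ => ?_)
      rw [proj]; ring
    rw [part1' x, hcb2, hexp]
    ring
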